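/- Let W = S_n be the symmetric group with Coxeter generators s_i = (i+1, i+2) for i = 0,...,n-2, so s_0 = (1,2). For any permutation w ∈ S_n, the maximum number of occurrences of s_0 in any reduced word for w equals lrmin(w), the number of left-to-right minima of w (positions j ≥ 2 with w(i) > w(j) for all i < j). Consequently, for w ∈ A_n = W^+, ℓ_{R∪R^{-1}}(w) = inv(w) − lrmin(w). -/

import Mathlib

open CoxeterSystem

namespace AltCox

variable {W : Type*} [Group W]

/-- Word length of `w` with respect to a generating set `A`:
the minimum length of a word in `A` whose product is `w`. -/
noncomputable def glen (A : Set W) (w : W) : ℕ :=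
  sInf {k | ∃ l : List W, (∀ x ∈ l, x ∈ A) ∧ l.prod = w ∧ l.length = k}

variable {n : ℕ} {M : CoxeterMatrix (Fin (n + 1))} (cs : CoxeterSystem M W)

/-- The alternating subgroup `W⁺`: the kernel of the sign character, i.e. the
set of elements of even Coxeter length. -/
def alt : Subgroup W where
  carrier := {w | Even (cs.length w)}
  one_mem' := by simp [Nat.even_iff]
  mul_mem' := by
    intro a b ha hb
    simp only [Set.mem_setOf_eq, Nat.even_iff] at *
    have := cs.length_mul_mod_two a b
    omega
  inv_mem' := by
    intro a ha
    simpa [cs.length_inv] using ha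

/-- The generating set `R = {r_i = s₀ sᵢ : i ≠ 0}` of `W⁺`. -/
def Rset : Set W := {x | ∃ i : Fin (n + 1), i ≠ 0 ∧ x = cs.simple 0 * cs.simple i}

/-- The symmetrized generating set `R ∪ R⁻¹`. -/
def Rsym : Set W := Rset cs ∪ (Rset cs)⁻¹

/-- `ν w`: the minimum number of letters different from `s₀` among all words
in the simple reflections whose product is `w`. -/
noncomputable def nu (w : W) : ℕ :=
  sInf {k | ∃ ω : List (Fin (n + 1)), cs.wordProd ω = w ∧
    (ω.filter (fun i => i ≠ 0)).length = k}

/-- `τ w` is the unique element of `{w, w s₀}` lying in `W⁺`. -/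
noncomputable def tau (w : W) : W :=
  if Even (cs.length w) then w else w * cs.simple 0

/-- `s₀` is evenly laced: `m₀ᵢ` is even or infinite (encoded by `0`) for all `i ≠ 0`. -/
def EvenlyLaced (M : CoxeterMatrix (Fin (n + 1))) : Prop :=
  ∀ i : Fin (n + 1), i ≠ 0 → Even (M 0 i)

/-- The set of all reflections of `(W, S)`. -/
def Tall : Set W := {t | cs.IsReflection t}

/-- The set `T̂` of reflections conjugate to some simple reflection other than `s₀`. -/
def That : Set W := {t | ∃ w : W, ∃ i : Fin (n + 1), i ≠ 0 ∧ t = w * cs.simple i * w⁻¹}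

/-- The set of odd palindromes of `W⁺` with respect to `R`. -/
def Palin : Set W :=
  {p | ∃ l : List W, (∀ x ∈ l, x ∈ Rsym cs) ∧ Odd l.length ∧ l.reverse = l ∧ l.prod = p}

/-- The set of left-shortening palindromes of `w`. -/
noncomputable def PL (w : W) : Set W :=
  {p ∈ Palin cs | glen (Rsym cs) (p * w) < glen (Rsym cs) w}

/-- The set of right-shortening palindromes of `w`. -/
noncomputable def PR (w : W) : Set W :=
  {p ∈ Palin cs | glen (Rsym cs) (w * p) < glen (Rsym cs) w}

/-- The right weak order on `(W⁺, R)`. -/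
noncomputable def rweak (u w : W) : Prop :=
  Relation.ReflTransGen
    (fun a b => ∃ r ∈ Rsym cs, b = a * r ∧
      glen (Rsym cs) b = glen (Rsym cs) a + 1) u w

/-- The left weak order on `(W⁺, R)`. -/
noncomputable def lweak (u w : W) : Prop :=
  Relation.ReflTransGen
    (fun a b => ∃ r ∈ Rsym cs, b = r * a ∧
      glen (Rsym cs) b = glen (Rsym cs) a + 1) u w

/-- The right strong order on `(W⁺, R)`. -/
noncomputable def rstrong (u w : W) : Prop :=
  Relation.ReflTransGen
    (fun a b => ∃ p ∈ Palin cs, b = a * p ∧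
      glen (Rsym cs) a < glen (Rsym cs) b) u w

/-- The left strong order on `(W⁺, R)`. -/
noncomputable def lstrong (u w : W) : Prop :=
  Relation.ReflTransGen
    (fun a b => ∃ p ∈ Palin cs, b = p * a ∧
      glen (Rsym cs) a < glen (Rsym cs) b) u w

/-- The strong Bruhat order on a Coxeter system. -/
noncomputable def bruhatLE {B : Type*} {M' : CoxeterMatrix B} {W' : Type*} [Group W']
    (cs' : CoxeterSystem M' W') (u w : W') : Prop :=
  Relation.ReflTransGen
    (fun a b => ∃ t, cs'.IsReflection t ∧ b = a * t ∧ cs'.length a < cs'.length b) u w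

/-- The right weak order of a Coxeter system. -/
noncomputable def coxRweak {B : Type*} {M' : CoxeterMatrix B} {W' : Type*} [Group W']
    (cs' : CoxeterSystem M' W') (u w : W') : Prop :=
  Relation.ReflTransGen
    (fun a b => ∃ i, b = a * cs'.simple i ∧ cs'.length b = cs'.length a + 1) u w

/-- The standard parabolic subgroup `W_J` for `J ⊆ S`. -/
def parabolic (J : Set (Fin (n + 1))) : Subgroup W :=
  Subgroup.closure (cs.simple '' J)

/-- The image `τ(J) = {s₀ sᵢ : sᵢ ∈ J, i ≠ 0}` of a subset `J ⊆ S` containing `s₀`. -/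
def tauSet (J : Set (Fin (n + 1))) : Set W :=
  {x | ∃ i ∈ J, i ≠ 0 ∧ x = cs.simple 0 * cs.simple i}

/-- The set `W^J` of minimum-length coset representatives for `W/W_J`. -/
def minReps (J : Set (Fin (n + 1))) : Set W :=
  {w | ∀ i ∈ J, cs.length w < cs.length (w * cs.simple i)}


/-- The number of left-to-right minima of a permutation. -/
def lrmin {m : ℕ} (w : Equiv.Perm (Fin (m + 1))) : ℕ :=
  (Finset.univ.filter (fun j : Fin (m + 1) => j ≠ 0 ∧ ∀ i < j, w j < w i)).card

/-- The number of inversions of a permutation. -/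
def invNum {m : ℕ} (w : Equiv.Perm (Fin (m + 1))) : ℕ :=
  (Finset.univ.filter (fun p : Fin (m + 1) × Fin (m + 1) => p.1 < p.2 ∧ w p.2 < w p.1)).card

section Perm

variable {N : ℕ}

lemma invNum_one : invNum (1 : Equiv.Perm (Fin (N + 1))) = 0 := by
  rw [invNum, Finset.card_eq_zero, Finset.filter_eq_empty_iff]
  rintro p -
  simp only [Equiv.Perm.one_apply]
  rintro ⟨h1, h2⟩
  exact absurd h1 (not_lt_of_gt h2)

lemma lrmin_one : lrmin (1 : Equiv.Perm (Fin (N + 1))) = 0 := by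
  rw [lrmin, Finset.card_eq_zero, Finset.filter_eq_empty_iff]
  rintro j -
  rintro ⟨h1, h2⟩
  have := h2 0 (Fin.pos_of_ne_zero h1)
  simp only [Equiv.Perm.one_apply] at this
  exact absurd this (Fin.not_lt_zero j)

lemma eq_one_of_invNum_eq_zero {w : Equiv.Perm (Fin (N + 1))} (h : invNum w = 0) : w = 1 := by
  rw [invNum, Finset.card_eq_zero, Finset.filter_eq_empty_iff] at h
  have hmono : StrictMono w := by
    intro p q hpq
    have := h (Finset.mem_univ (p, q))
    simp only [not_and, not_lt] at this
    exact lt_of_le_of_ne (this hpq) (fun he => absurd (w.injective he) (ne_of_lt hpq))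
  haveI : WellFoundedLT (Fin (N + 1)) := Finite.to_wellFoundedLT
  have : ⇑w = ⇑(1 : Equiv.Perm (Fin (N+1))) :=
    (hmono.range_inj strictMono_id).1 (by simp [Equiv.range_eq_univ, Set.range_id])
  exact Equiv.coe_fn_injective this

variable (w : Equiv.Perm (Fin (N + 2))) (i : Fin (N + 1))

lemma swap_fix_of_lt {k : Fin (N + 2)} (hk : k < i.castSucc) :
    Equiv.swap i.castSucc i.succ k = k :=
  Equiv.swap_apply_of_ne_of_ne (ne_of_lt hk) (ne_of_lt (hk.trans (Fin.castSucc_lt_succ (i := i))))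

lemma swap_val (x : Fin (N + 2)) : (Equiv.swap i.castSucc i.succ x : Fin (N + 2)).val =
    if x.val = i.val then i.val + 1 else if x.val = i.val + 1 then i.val else x.val := by
  rcases eq_or_ne x i.castSucc with rfl | hxa
  · rw [Equiv.swap_apply_left]
    simp only [Fin.val_succ, Fin.coe_castSucc]
    split_ifs <;> omega
  · have hva : x.val ≠ i.val := fun hv => hxa (Fin.ext (by simpa using hv))
    rcases eq_or_ne x i.succ with rfl | hxb
    · rw [Equiv.swap_apply_right]
      simp only [Fin.val_succ, Fin.coe_castSucc]
      split_ifs <;> omega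
    · have hvb : x.val ≠ i.val + 1 := fun hv => hxb (Fin.ext (by simpa using hv))
      rw [Equiv.swap_apply_of_ne_of_ne hxa hxb, if_neg hva, if_neg hvb]

lemma swap_lt_swap {p q : Fin (N + 2)} (hpq : p < q) (h : ¬(p = i.castSucc ∧ q = i.succ)) :
    Equiv.swap i.castSucc i.succ p < Equiv.swap i.castSucc i.succ q := by
  have h' : ¬(p.val = i.val ∧ q.val = i.val + 1) := by
    simpa only [Fin.ext_iff, Fin.coe_castSucc, Fin.val_succ] using h
  rw [Fin.lt_def] at hpq ⊢
  rw [swap_val, swap_val]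
  have hq2 : q.val < N + 2 := q.isLt
  split_ifs <;> omega

lemma invNum_mul_swap_of_lt (h : w i.castSucc < w i.succ) :
    invNum (w * Equiv.swap i.castSucc i.succ) = invNum w + 1 := by
  classical
  set a := i.castSucc with ha
  set b := i.succ with hb
  set σ := Equiv.swap a b with hσ
  have hσσ : ∀ x, σ (σ x) = x := fun x => Equiv.swap_apply_self a b x
  have hab : a < b := Fin.castSucc_lt_succ (i := i)
  set S' := Finset.univ.filter
      (fun p : Fin (N + 2) × Fin (N + 2) => p.1 < p.2 ∧ (w * σ) p.2 < (w * σ) p.1) with hS'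
  set S := Finset.univ.filter
      (fun p : Fin (N + 2) × Fin (N + 2) => p.1 < p.2 ∧ w p.2 < w p.1) with hS
  have hmem : (a, b) ∈ S' := by
    simp only [hS', Finset.mem_filter, Finset.mem_univ, true_and]
    refine ⟨hab, ?_⟩
    simp only [Equiv.Perm.mul_apply, hσ, Equiv.swap_apply_left, Equiv.swap_apply_right]
    exact h
  have hcard : (S'.erase (a, b)).card = S.card := by
    apply Finset.card_bij' (i := fun p _ => (σ p.1, σ p.2)) (j := fun p _ => (σ p.1, σ p.2))
    · rintro ⟨p, q⟩ hp
      simp only [Finset.mem_erase, hS', Finset.mem_filter, Finset.mem_univ, true_and] at hp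
      obtain ⟨hne, hpq, hinv⟩ := hp
      simp only [hS, Finset.mem_filter, Finset.mem_univ, true_and]
      constructor
      · apply swap_lt_swap _ hpq
        rintro ⟨rfl, rfl⟩
        exact hne rfl
      · simpa only [Equiv.Perm.mul_apply] using hinv
    · rintro ⟨p, q⟩ hp
      simp only [hS, Finset.mem_filter, Finset.mem_univ, true_and] at hp
      obtain ⟨hpq, hinv⟩ := hp
      have hne : ¬(p = a ∧ q = b) := by
        rintro ⟨rfl, rfl⟩
        exact absurd hinv (not_lt_of_gt h)
      simp only [Finset.mem_erase, hS', Finset.mem_filter, Finset.mem_univ, true_and]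
      refine ⟨?_, swap_lt_swap _ hpq hne, ?_⟩
      · intro hc
        have h1 : σ p = a := congrArg Prod.fst hc
        have h2 : σ q = b := congrArg Prod.snd hc
        have hp' : p = b := by
          calc p = σ (σ p) := (hσσ p).symm
          _ = σ a := by rw [h1]
          _ = b := Equiv.swap_apply_left a b
        have hq' : q = a := by
          calc q = σ (σ q) := (hσσ q).symm
          _ = σ b := by rw [h2]
          _ = a := Equiv.swap_apply_right a b
        rw [hp', hq'] at hpq
        exact absurd hpq (not_lt_of_gt hab)
      · simpa only [Equiv.Perm.mul_apply, hσσ] using hinv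
    · rintro ⟨p, q⟩ _; simp [hσσ]
    · rintro ⟨p, q⟩ _; simp [hσσ]
  have hone := Finset.card_erase_add_one hmem
  rw [hcard] at hone
  have e1 : invNum (w * σ) = S'.card := rfl
  have e2 : invNum w = S.card := rfl
  omega

lemma invNum_mul_swap_of_gt (h : w i.succ < w i.castSucc) :
    invNum w = invNum (w * Equiv.swap i.castSucc i.succ) + 1 := by
  have key := invNum_mul_swap_of_lt (w * Equiv.swap i.castSucc i.succ) i (by
    simp only [Equiv.Perm.mul_apply, Equiv.swap_apply_left, Equiv.swap_apply_right]
    exact h)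
  rwa [mul_assoc, Equiv.swap_mul_self, mul_one] at key


lemma card_pair_split {α : Type*} [DecidableEq α] (G : Finset α) {a b : α} (hab : a ≠ b) :
    G.card = (G \ {a, b}).card + ((if a ∈ G then 1 else 0) + (if b ∈ G then 1 else 0)) := by
  have h1 := Finset.card_sdiff_add_card_inter G {a, b}
  have h2 : (G ∩ {a, b}).card = (if a ∈ G then 1 else 0) + (if b ∈ G then 1 else 0) := by
    by_cases ha : a ∈ G <;> by_cases hb : b ∈ G
    · rw [if_pos ha, if_pos hb]
      have hi : G ∩ {a, b} = {a, b} := by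
        ext x
        simp only [Finset.mem_inter, Finset.mem_insert, Finset.mem_singleton]
        constructor
        · exact And.right
        · rintro (rfl | rfl) <;> simp [ha, hb]
      rw [hi, Finset.card_pair hab]
    · rw [if_pos ha, if_neg hb]
      have hi : G ∩ {a, b} = {a} := by
        ext x
        simp only [Finset.mem_inter, Finset.mem_insert, Finset.mem_singleton]
        constructor
        · rintro ⟨hx, rfl | rfl⟩
          · rfl
          · exact absurd hx hb
        · rintro rfl; exact ⟨ha, Or.inl rfl⟩
      rw [hi, Finset.card_singleton]
    · rw [if_neg ha, if_pos hb]
      have hi : G ∩ {a, b} = {b} := by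
        ext x
        simp only [Finset.mem_inter, Finset.mem_insert, Finset.mem_singleton]
        constructor
        · rintro ⟨hx, rfl | rfl⟩
          · exact absurd hx ha
          · rfl
        · rintro rfl; exact ⟨hb, Or.inr rfl⟩
      rw [hi, Finset.card_singleton]
    · rw [if_neg ha, if_neg hb]
      have hi : G ∩ {a, b} = ∅ := by
        ext x
        simp only [Finset.mem_inter, Finset.mem_insert, Finset.mem_singleton,
          Finset.notMem_empty, iff_false]
        rintro ⟨hx, rfl | rfl⟩
        · exact ha hx
        · exact hb hx
      rw [hi, Finset.card_empty]
  omega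

lemma mem_iff_aux {j : Fin (N + 2)} (hja : j ≠ i.castSucc) (hjb : j ≠ i.succ) :
    (∀ k < j, (w * Equiv.swap i.castSucc i.succ) j < (w * Equiv.swap i.castSucc i.succ) k) ↔
      (∀ k < j, w j < w k) := by
  have hfixj : Equiv.swap i.castSucc i.succ j = j := Equiv.swap_apply_of_ne_of_ne hja hjb
  simp only [Equiv.Perm.mul_apply, hfixj]
  rcases lt_or_gt_of_ne hja with hj | hj
  · constructor
    · intro H k hk
      have := H k hk
      rwa [swap_fix_of_lt i (hk.trans hj)] at this
    · intro H k hk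
      rw [swap_fix_of_lt i (hk.trans hj)]
      exact H k hk
  · have hjb' : i.succ < j := by
      have hne : j.val ≠ i.val + 1 := fun hv => hjb (Fin.ext (by simpa using hv))
      have hjv : (i.val : ℕ) < j.val := by simpa [gt_iff_lt, Fin.lt_def] using hj
      rw [Fin.lt_def]
      simp only [Fin.val_succ]
      omega
    have hσlt : ∀ k, k < j → Equiv.swap i.castSucc i.succ k < j := by
      intro k hk
      rcases eq_or_ne k i.castSucc with rfl | hka
      · rw [Equiv.swap_apply_left]; exact hjb'
      rcases eq_or_ne k i.succ with rfl | hkb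
      · rw [Equiv.swap_apply_right]; exact (Fin.castSucc_lt_succ (i := i)).trans hjb'
      · rwa [Equiv.swap_apply_of_ne_of_ne hka hkb]
    have hσσ : ∀ x, Equiv.swap i.castSucc i.succ (Equiv.swap i.castSucc i.succ x) = x :=
      fun x => Equiv.swap_apply_self _ _ x
    constructor
    · intro H k hk
      have := H _ (hσlt k hk)
      rwa [hσσ] at this
    · intro H k hk
      exact H _ (hσlt k hk)

lemma lrmin_mul_swap_of_lt (h : w i.castSucc < w i.succ) :
    lrmin (w * Equiv.swap i.castSucc i.succ) = lrmin w +
      (if ∀ k < i.castSucc, w i.succ < w k then 1 else 0) := by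
  classical
  set a := i.castSucc with hadef
  set b := i.succ with hbdef
  set σ := Equiv.swap a b with hσ
  have hab : a < b := Fin.castSucc_lt_succ (i := i)
  set G' := Finset.univ.filter (fun j : Fin (N + 2) => j ≠ 0 ∧ ∀ k < j, (w * σ) j < (w * σ) k)
    with hG'
  set G := Finset.univ.filter (fun j : Fin (N + 2) => j ≠ 0 ∧ ∀ k < j, w j < w k) with hG
  have e1 : lrmin (w * σ) = G'.card := rfl
  have e2 : lrmin w = G.card := rfl
  have hsd : G' \ {a, b} = G \ {a, b} := by
    ext j
    simp only [hG', hG, Finset.mem_sdiff, Finset.mem_filter, Finset.mem_univ, true_and,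
      Finset.mem_insert, Finset.mem_singleton, not_or]
    constructor
    · rintro ⟨⟨hj0, hc⟩, hja, hjb⟩
      exact ⟨⟨hj0, (mem_iff_aux w i hja hjb).1 hc⟩, hja, hjb⟩
    · rintro ⟨⟨hj0, hc⟩, hja, hjb⟩
      exact ⟨⟨hj0, (mem_iff_aux w i hja hjb).2 hc⟩, hja, hjb⟩
  have hb0 : b ≠ 0 := Fin.succ_ne_zero i
  have hkb : ∀ k : Fin (N + 2), k < b ↔ (k < a ∨ k = a) := by
    intro k
    rw [Fin.lt_def, Fin.lt_def, Fin.ext_iff]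
    simp only [hbdef, hadef, Fin.val_succ, Fin.coe_castSucc]
    omega
  have hwa : (w * σ) a = w b := by rw [Equiv.Perm.mul_apply, hσ, Equiv.swap_apply_left]
  have hwb : (w * σ) b = w a := by rw [Equiv.Perm.mul_apply, hσ, Equiv.swap_apply_right]
  have hwk : ∀ k, k < a → (w * σ) k = w k := fun k hk => by
    rw [Equiv.Perm.mul_apply, hσ, swap_fix_of_lt i hk]
  have maG' : a ∈ G' ↔ (a ≠ 0 ∧ ∀ k < a, w b < w k) := by
    simp only [hG', Finset.mem_filter, Finset.mem_univ, true_and]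
    constructor
    · rintro ⟨h0, hc⟩
      exact ⟨h0, fun k hk => by have := hc k hk; rwa [hwa, hwk k hk] at this⟩
    · rintro ⟨h0, hc⟩
      exact ⟨h0, fun k hk => by rw [hwa, hwk k hk]; exact hc k hk⟩
  have maG : a ∈ G ↔ (a ≠ 0 ∧ ∀ k < a, w a < w k) := by
    simp only [hG, Finset.mem_filter, Finset.mem_univ, true_and]
  have mbG' : b ∈ G' ↔ (∀ k < a, w a < w k) := by
    simp only [hG', Finset.mem_filter, Finset.mem_univ, true_and]
    constructor
    · rintro ⟨-, hc⟩ k hk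
      have := hc k ((hkb k).2 (Or.inl hk))
      rwa [hwb, hwk k hk] at this
    · intro hc
      refine ⟨hb0, fun k hk => ?_⟩
      rcases (hkb k).1 hk with hk' | rfl
      · rw [hwb, hwk k hk']; exact hc k hk'
      · rw [hwb, hwa]; exact h
  have mbG : b ∉ G := by
    simp only [hG, Finset.mem_filter, Finset.mem_univ, true_and, not_and]
    intro _ hc
    exact absurd (hc a ((hkb a).2 (Or.inr rfl))) (not_lt_of_gt h)
  have c1 := card_pair_split G' (ne_of_lt hab)
  have c2 := card_pair_split G (ne_of_lt hab)
  rw [hsd] at c1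
  rw [e1, e2, c1, c2, if_neg mbG]
  simp only [maG', maG, mbG']
  by_cases h0 : a = 0
  · have hP : ∀ k < a, w a < w k := by
      intro k hk
      rw [h0] at hk
      exact absurd hk (Fin.not_lt_zero k)
    have hQ : ∀ k < a, w b < w k := by
      intro k hk
      rw [h0] at hk
      exact absurd hk (Fin.not_lt_zero k)
    simp [h0, hP, hQ]
  · by_cases hP : ∀ k < a, w a < w k <;> by_cases hQ : ∀ k < a, w b < w k <;>
      simp [h0, hP, hQ] <;> omega

lemma lrmin_mul_swap_of_gt (h : w i.succ < w i.castSucc) :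
    lrmin w = lrmin (w * Equiv.swap i.castSucc i.succ) +
      (if ∀ k < i.castSucc, w i.castSucc < w k then 1 else 0) := by
  have key := lrmin_mul_swap_of_lt (w * Equiv.swap i.castSucc i.succ) i (by
    simp only [Equiv.Perm.mul_apply, Equiv.swap_apply_left, Equiv.swap_apply_right]
    exact h)
  rw [mul_assoc, Equiv.swap_mul_self, mul_one] at key
  rw [key]
  congr 1
  apply if_congr _ rfl rfl
  constructor
  · intro H k hk
    have := H k hk
    rwa [Equiv.Perm.mul_apply, Equiv.swap_apply_right, Equiv.Perm.mul_apply,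
      swap_fix_of_lt i hk] at this
  · intro H k hk
    rw [Equiv.Perm.mul_apply, Equiv.swap_apply_right, Equiv.Perm.mul_apply, swap_fix_of_lt i hk]
    exact H k hk

end Perm

lemma exists_good_word {N : ℕ} {CM : CoxeterMatrix (Fin (N + 1))}
    (cs : CoxeterSystem CM (Equiv.Perm (Fin (N + 2))))
    (hs : ∀ i : Fin (N + 1), cs.simple i = Equiv.swap i.castSucc i.succ) : ∀ (k : ℕ) (w : Equiv.Perm (Fin (N + 2))), invNum w ≤ k →
    ∃ ω : List (Fin (N + 1)), cs.wordProd ω = w ∧ ω.length = invNum w ∧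
      (ω.filter (fun i => i ≠ 0)).length + lrmin w = invNum w := by
  intro k
  induction k with
  | zero =>
    intro w hw
    have h0 : invNum w = 0 := Nat.le_zero.mp hw
    have hw1 : w = 1 := eq_one_of_invNum_eq_zero h0
    subst hw1
    exact ⟨[], cs.wordProd_nil, by simp [invNum_one], by simp [invNum_one, lrmin_one]⟩
  | succ k ih =>
    intro w hw
    by_cases h0 : invNum w = 0
    · have hw1 : w = 1 := eq_one_of_invNum_eq_zero h0
      subst hw1
      exact ⟨[], cs.wordProd_nil, by simp [invNum_one], by simp [invNum_one, lrmin_one]⟩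
    · have hne : w ≠ 1 := by
        rintro rfl
        exact h0 invNum_one
      have hdesc : ∃ i : Fin (N + 1), w i.succ < w i.castSucc := by
        by_contra hc
        push_neg at hc
        apply hne
        have hmono : StrictMono w := by
          rw [Fin.strictMono_iff_lt_succ]
          intro i
          rcases lt_or_eq_of_le (hc i) with h | h
          · exact h
          · exact absurd (w.injective h) (ne_of_lt (Fin.castSucc_lt_succ (i := i)))
        haveI : WellFoundedLT (Fin (N + 2)) := Finite.to_wellFoundedLT
        have : ⇑w = ⇑(1 : Equiv.Perm (Fin (N + 2))) :=
          (hmono.range_inj strictMono_id).1 (by simp [Equiv.range_eq_univ, Set.range_id])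
        exact Equiv.coe_fn_injective this
      rcases lt_or_ge (w ((0 : Fin (N + 1)).succ)) (w ((0 : Fin (N + 1)).castSucc)) with hz | hz
      · -- descent at position 0
        have hinv := invNum_mul_swap_of_gt w 0 hz
        have hlr := lrmin_mul_swap_of_gt w 0 hz
        have hcondP : ∀ k < ((0 : Fin (N + 1)).castSucc), w ((0 : Fin (N + 1)).castSucc) < w k := by
          intro k hk
          rw [Fin.lt_def] at hk
          simp only [Fin.coe_castSucc, Fin.val_zero] at hk
          exact absurd hk (Nat.not_lt_zero _)
        rw [if_pos hcondP] at hlr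
        obtain ⟨ω', hw1, hw2, hw3⟩ :=
          ih (w * Equiv.swap (0 : Fin (N + 1)).castSucc (0 : Fin (N + 1)).succ) (by omega)
        refine ⟨ω' ++ [0], ?_, ?_, ?_⟩
        · rw [cs.wordProd_append, hw1, cs.wordProd_cons, cs.wordProd_nil, mul_one, hs 0,
            mul_assoc, Equiv.swap_mul_self, mul_one]
        · simp only [List.length_append, List.length_singleton]
          omega
        · have hfil : ((ω' ++ [0]).filter (fun i => i ≠ 0)).length
              = (ω'.filter (fun i => i ≠ 0)).length := by
            simp [List.filter_append]
          omega
      · -- all descents are at positions ≥ 1; pick one with maximal top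
        set D := Finset.univ.filter (fun i : Fin (N + 1) => w i.succ < w i.castSucc) with hDdef
        have hDne : D.Nonempty := by
          obtain ⟨i, hi⟩ := hdesc
          exact ⟨i, by simp [hDdef, hi]⟩
        obtain ⟨i, hiD, hmax⟩ := Finset.exists_max_image D (fun i => w i.castSucc) hDne
        have hdi : w i.succ < w i.castSucc := by
          have := Finset.mem_filter.mp hiD
          exact this.2
        have hi0 : i ≠ 0 := by
          rintro rfl
          exact absurd hdi (not_lt_of_ge hz)
        have hnotP : ¬ ∀ k < i.castSucc, w i.castSucc < w k := by
          intro hP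
          have h0lt : (0 : Fin (N + 2)) < i.castSucc := by
            rw [Fin.lt_def]
            simp only [Fin.val_zero, Fin.coe_castSucc]
            have := Fin.pos_of_ne_zero hi0
            rw [Fin.lt_def] at this
            simpa using this
          have hw0 : w i.castSucc < w 0 := hP 0 h0lt
          have hstep : ∃ j : Fin (N + 1), j.castSucc < i.castSucc ∧ w j.succ < w j.castSucc := by
            by_contra hcj
            push_neg at hcj
            have hiv : i.val < N + 1 := i.isLt
            have key : ∀ m : ℕ, ∀ hm : m ≤ i.val, w 0 ≤ w ⟨m, by omega⟩ := by
              intro m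
              induction m with
              | zero =>
                intro _
                exact le_of_eq (congrArg w (Fin.ext rfl))
              | succ m ihm =>
                intro hm
                have hm' : m ≤ i.val := by omega
                set j : Fin (N + 1) := ⟨m, by omega⟩ with hj
                have hjc : j.castSucc = (⟨m, by omega⟩ : Fin (N + 2)) := Fin.ext rfl
                have hjs : j.succ = (⟨m + 1, by omega⟩ : Fin (N + 2)) := Fin.ext rfl
                have hlt : j.castSucc < i.castSucc := by
                  rw [Fin.lt_def]
                  simp only [hjc, Fin.coe_castSucc]
                  omega
                have hmono := hcj j hlt
                rw [hjc, hjs] at hmono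
                exact le_trans (ihm hm') hmono
            have hkey := key i.val (le_refl _)
            have hic : i.castSucc = (⟨i.val, by omega⟩ : Fin (N + 2)) := Fin.ext rfl
            rw [← hic] at hkey
            exact absurd hw0 (not_lt_of_ge hkey)
          obtain ⟨j, hjlt, hjdesc⟩ := hstep
          have hjD : j ∈ D := by simp [hDdef, hjdesc]
          have hjle := hmax j hjD
          exact absurd (hP j.castSucc hjlt) (not_lt_of_ge hjle)
        have hinv := invNum_mul_swap_of_gt w i hdi
        have hlr := lrmin_mul_swap_of_gt w i hdi
        rw [if_neg hnotP, add_zero] at hlr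
        obtain ⟨ω', hw1, hw2, hw3⟩ := ih (w * Equiv.swap i.castSucc i.succ) (by omega)
        refine ⟨ω' ++ [i], ?_, ?_, ?_⟩
        · rw [cs.wordProd_append, hw1, cs.wordProd_cons, cs.wordProd_nil, mul_one, hs i,
            mul_assoc, Equiv.swap_mul_self, mul_one]
        · simp only [List.length_append, List.length_singleton]
          omega
        · have hfil : ((ω' ++ [i]).filter (fun x => x ≠ 0)).length
              = (ω'.filter (fun x => x ≠ 0)).length + 1 := by
            simp [List.filter_append, hi0]
          omega

lemma invNum_wordProd_le {N : ℕ} {CM : CoxeterMatrix (Fin (N + 1))}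
    (cs : CoxeterSystem CM (Equiv.Perm (Fin (N + 2))))
    (hs : ∀ i : Fin (N + 1), cs.simple i = Equiv.swap i.castSucc i.succ) (ω : List (Fin (N + 1))) :
    invNum (cs.wordProd ω) ≤ (ω.filter (fun i => i ≠ 0)).length + lrmin (cs.wordProd ω) ∧
    invNum (cs.wordProd ω) ≤ ω.length := by
  induction ω using List.reverseRecOn with
  | nil => simp [cs.wordProd_nil, invNum_one]
  | append_singleton ω i ihω =>
    obtain ⟨ih1, ih2⟩ := ihω
    set u := cs.wordProd ω with hu
    have hw : cs.wordProd (ω ++ [i]) = u * Equiv.swap i.castSucc i.succ := by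
      rw [cs.wordProd_append, cs.wordProd_cons, cs.wordProd_nil, mul_one, hs i]
    rw [hw]
    have hfil : ((ω ++ [i]).filter (fun x => x ≠ 0)).length
        = (ω.filter (fun x => x ≠ 0)).length + (if i = 0 then 0 else 1) := by
      by_cases hi : i = 0 <;> simp [List.filter_append, hi]
    have hlen : (ω ++ [i]).length = ω.length + 1 := by simp
    rcases lt_trichotomy (u i.castSucc) (u i.succ) with hlt | heq | hgt
    · have hinv := invNum_mul_swap_of_lt u i hlt
      have hlr := lrmin_mul_swap_of_lt u i hlt
      rw [hfil, hlen, hinv, hlr]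
      constructor
      · by_cases hi : i = 0
        · have hcond : ∀ k < i.castSucc, u i.succ < u k := by
            intro k hk
            rw [hi, Fin.lt_def] at hk
            simp only [Fin.coe_castSucc, Fin.val_zero] at hk
            exact absurd hk (Nat.not_lt_zero _)
          rw [if_pos hcond, if_pos hi]
          omega
        · rw [if_neg hi]
          split_ifs <;> omega
      · omega
    · exact absurd (u.injective heq) (ne_of_lt (Fin.castSucc_lt_succ (i := i)))
    · have hinv := invNum_mul_swap_of_gt u i hgt
      have hlr := lrmin_mul_swap_of_gt u i hgt
      rw [hfil, hlen]
      constructor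
      · split_ifs at hlr ⊢ <;> omega
      · omega

lemma length_eq_invNum {N : ℕ} {CM : CoxeterMatrix (Fin (N + 1))}
    (cs : CoxeterSystem CM (Equiv.Perm (Fin (N + 2))))
    (hs : ∀ i : Fin (N + 1), cs.simple i = Equiv.swap i.castSucc i.succ) (w : Equiv.Perm (Fin (N + 2))) : cs.length w = invNum w := by
  apply le_antisymm
  · obtain ⟨ω, hw1, hw2, -⟩ := exists_good_word cs hs (invNum w) w (le_refl _)
    calc cs.length w = cs.length (cs.wordProd ω) := by rw [hw1]
    _ ≤ ω.length := cs.length_wordProd_le ω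
    _ = invNum w := hw2
  · obtain ⟨ω, hlen, rfl⟩ := cs.exists_reduced_word w
    rw [show cs.length (cs.wordProd ω) = ω.length from hlen]
    exact (invNum_wordProd_le cs hs ω).2


lemma count_filter_len {N : ℕ} (ω : List (Fin (N + 1))) :
    ω.count 0 + (ω.filter (fun i => i ≠ 0)).length = ω.length := by
  induction ω with
  | nil => rfl
  | cons i t ih =>
    by_cases hi : i = 0
    · subst hi
      rw [List.count_cons_self, List.filter_cons_of_neg (by simp), List.length_cons]
      omega
    · rw [List.count_cons_of_ne hi, List.filter_cons_of_pos (by simp [hi]),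
        List.length_cons, List.length_cons]
      omega


lemma mem_Rsym_left {i : Fin (n + 1)} (hi : i ≠ 0) : cs.simple 0 * cs.simple i ∈ Rsym cs :=
  Set.mem_union_left _ ⟨i, hi, rfl⟩

lemma mem_Rsym_right {i : Fin (n + 1)} (hi : i ≠ 0) : cs.simple i * cs.simple 0 ∈ Rsym cs := by
  apply Set.mem_union_right
  rw [Set.mem_inv, mul_inv_rev, cs.inv_simple, cs.inv_simple]
  exact ⟨i, hi, rfl⟩

lemma pair_word : ∀ ω : List (Fin (n + 1)), Even ω.length →
    ∃ l : List W, (∀ x ∈ l, x ∈ Rsym cs) ∧ l.prod = cs.wordProd ω ∧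
      l.length = (ω.filter (fun i => i ≠ 0)).length
  | [], _ => ⟨[], by simp, by simp [cs.wordProd_nil], by simp⟩
  | [i], h => by simp at h
  | i :: j :: rest, h => by
    have hr : Even rest.length := by
      simp only [List.length_cons] at h
      rcases h with ⟨t, ht⟩
      exact ⟨t - 1, by omega⟩
    obtain ⟨l, h1, h2, h3⟩ := pair_word rest hr
    have hπ : cs.wordProd (i :: j :: rest) = cs.simple i * (cs.simple j * cs.wordProd rest) := by
      rw [cs.wordProd_cons, cs.wordProd_cons]
    by_cases hi : i = 0 <;> by_cases hj : j = 0
    · subst hi; subst hj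
      refine ⟨l, h1, ?_, ?_⟩
      · rw [h2, hπ, ← mul_assoc, cs.simple_mul_simple_self, one_mul]
      · rw [h3]
        rw [List.filter_cons_of_neg (by simp), List.filter_cons_of_neg (by simp)]
    · subst hi
      refine ⟨(cs.simple 0 * cs.simple j) :: l, ?_, ?_, ?_⟩
      · intro x hx
        rcases List.mem_cons.mp hx with rfl | hx
        · exact mem_Rsym_left cs hj
        · exact h1 x hx
      · rw [List.prod_cons, h2, hπ, mul_assoc]
      · rw [List.length_cons, h3, List.filter_cons_of_neg (by simp),
          List.filter_cons_of_pos (by simp [hj]), List.length_cons]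
    · subst hj
      refine ⟨(cs.simple i * cs.simple 0) :: l, ?_, ?_, ?_⟩
      · intro x hx
        rcases List.mem_cons.mp hx with rfl | hx
        · exact mem_Rsym_right cs hi
        · exact h1 x hx
      · rw [List.prod_cons, h2, hπ, mul_assoc]
      · rw [List.length_cons, h3, List.filter_cons_of_pos (by simp [hi]),
          List.filter_cons_of_neg (by simp), List.length_cons]
    · refine ⟨(cs.simple i * cs.simple 0) :: (cs.simple 0 * cs.simple j) :: l, ?_, ?_, ?_⟩
      · intro x hx
        rcases List.mem_cons.mp hx with rfl | hx
        · exact mem_Rsym_right cs hi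
        rcases List.mem_cons.mp hx with rfl | hx
        · exact mem_Rsym_left cs hj
        · exact h1 x hx
      · rw [List.prod_cons, List.prod_cons, h2, hπ]
        simp only [← mul_assoc]
        congr 2
        rw [mul_assoc, cs.simple_mul_simple_self, mul_one]
      · rw [List.length_cons, List.length_cons, h3, List.filter_cons_of_pos (by simp [hi]),
          List.filter_cons_of_pos (by simp [hj]), List.length_cons, List.length_cons]

lemma expand_word : ∀ l : List W, (∀ x ∈ l, x ∈ Rsym cs) →
    ∃ ω : List (Fin (n + 1)), cs.wordProd ω = l.prod ∧
      (ω.filter (fun i => i ≠ 0)).length = l.length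
  | [], _ => ⟨[], by simp [cs.wordProd_nil], by simp⟩
  | x :: l, hl => by
    obtain ⟨ω, h1, h2⟩ := expand_word l (fun y hy => hl y (List.mem_cons_of_mem x hy))
    have hx := hl x (List.mem_cons_self (a := x) (l := l))
    rcases hx with ⟨i, hi, hxe⟩ | hxinv
    · refine ⟨0 :: i :: ω, ?_, ?_⟩
      · rw [cs.wordProd_cons, cs.wordProd_cons, h1, List.prod_cons, hxe, mul_assoc]
      · rw [List.filter_cons_of_neg (by simp), List.filter_cons_of_pos (by simp [hi]),
          List.length_cons, List.length_cons, h2]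
    · rw [Set.mem_inv] at hxinv
      obtain ⟨i, hi, hxe⟩ := hxinv
      have hxe' : x = cs.simple i * cs.simple 0 := by
        rw [← inv_inv x, hxe, mul_inv_rev, cs.inv_simple, cs.inv_simple]
      refine ⟨i :: 0 :: ω, ?_, ?_⟩
      · rw [cs.wordProd_cons, cs.wordProd_cons, h1, List.prod_cons, hxe', mul_assoc]
      · rw [List.filter_cons_of_pos (by simp [hi]), List.filter_cons_of_neg (by simp),
          List.length_cons, List.length_cons, h2]



/-- In the symmetric group with adjacent transposition generators
(`s₀ = (1,2)`): the maximum number of occurrences of `s₀` in a reduced word for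
`w` is `lrmin w`, and consequently for `w` in the alternating group,
`ℓ_{R ∪ R⁻¹}(w) = inv(w) − lrmin(w)`. -/
theorem statement2 {n : ℕ} {M : CoxeterMatrix (Fin (n + 1))}
    (cs : CoxeterSystem M (Equiv.Perm (Fin (n + 2))))
    (hs : ∀ i : Fin (n + 1), cs.simple i = Equiv.swap i.castSucc i.succ) :
    (∀ w : Equiv.Perm (Fin (n + 2)),
      IsGreatest {k | ∃ ω : List (Fin (n + 1)), cs.IsReduced ω ∧
        cs.wordProd ω = w ∧ ω.count 0 = k} (lrmin w)) ∧
    (∀ w ∈ alt cs, glen (Rsym cs) w = invNum w - lrmin w) := by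
  constructor
  · intro w
    constructor
    · -- membership
      obtain ⟨ω, hw1, hw2, hw3⟩ := exists_good_word cs hs (invNum w) w (le_refl _)
      refine ⟨ω, ?_, hw1, ?_⟩
      · show cs.length (cs.wordProd ω) = ω.length
        rw [hw1, length_eq_invNum cs hs w, hw2]
      · have hc := count_filter_len ω
        omega
    · -- upper bound
      rintro k ⟨ω, hred, hprod, hcount⟩
      have hlen : ω.length = invNum w := by
        have : cs.length (cs.wordProd ω) = ω.length := hred
        rw [hprod, length_eq_invNum cs hs w] at this
        omega
      have hub := (invNum_wordProd_le cs hs ω).1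
      rw [hprod] at hub
      have hc := count_filter_len ω
      omega
  · intro w hw
    have hw' : Even (cs.length w) := hw
    rw [length_eq_invNum cs hs w] at hw'
    obtain ⟨ω, hw1, hw2, hw3⟩ := exists_good_word cs hs (invNum w) w (le_refl _)
    have heven : Even ω.length := by rw [hw2]; exact hw'
    obtain ⟨l, hl1, hl2, hl3⟩ := pair_word cs ω heven
    have hmem : (ω.filter (fun i => i ≠ 0)).length ∈
        {k | ∃ l' : List (Equiv.Perm (Fin (n + 2))),
          (∀ x ∈ l', x ∈ Rsym cs) ∧ l'.prod = w ∧ l'.length = k} :=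
      ⟨l, hl1, by rw [hl2, hw1], hl3⟩
    have hle : glen (Rsym cs) w ≤ (ω.filter (fun i => i ≠ 0)).length := Nat.sInf_le hmem
    have hlb : ∀ k ∈ {k | ∃ l' : List (Equiv.Perm (Fin (n + 2))),
        (∀ x ∈ l', x ∈ Rsym cs) ∧ l'.prod = w ∧ l'.length = k},
        (ω.filter (fun i => i ≠ 0)).length ≤ k := by
      rintro k ⟨l', hl'1, hl'2, rfl⟩
      obtain ⟨ω', hω'1, hω'2⟩ := expand_word cs l' hl'1
      have hub := (invNum_wordProd_le cs hs ω').1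
      rw [hω'1, hl'2] at hub
      omega
    have hge : (ω.filter (fun i => i ≠ 0)).length ≤ glen (Rsym cs) w :=
      hlb _ (Nat.sInf_mem ⟨_, hmem⟩)
    have : glen (Rsym cs) w = (ω.filter (fun i => i ≠ 0)).length := le_antisymm hle hge
    omega

end AltCox
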